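/- Let (X,T) be a dynamical system and x, y ∈ X. The following are equivalent: (1) x is strongly proximal to y, i.e., (y,y) lies in the ω-limit set of (x,y) under T×T; (2) for every open neighborhood U of y the set {n ∈ ℕ : T^n x ∈ U and T^n y ∈ U} is an IP set; (3) for every k ∈ ℕ, (y,y) lies in the ω-limit set of (x,y) under (T^k)×(T^k). -/

import Mathlib

open Finset

/-- `x` is strongly proximal to `y`: `(y, y)` lies in the ω-limit set of `(x, y)`
under `T × T`, i.e. for every open `W ∋ (y,y)` in `X × X` and every `m ∈ ℕ₊`
there is `n ≥ m` with `(T^n x, T^n y) ∈ W`. -/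
def StronglyProximal {X : Type*} [TopologicalSpace X] (T : X → X) (x y : X) : Prop :=
  ∀ W : Set (X × X), IsOpen W → (y, y) ∈ W →
    ∀ m : ℕ+, ∃ n : ℕ+, m ≤ n ∧ (T^[(n : ℕ)] x, T^[(n : ℕ)] y) ∈ W

/-- `A ⊆ ℕ₊` is an IP set: all finite sums of some sequence in `ℕ₊` lie in `A`. -/
def IsIPSet (A : Set ℕ+) : Prop :=
  ∃ x : ℕ+ → ℕ+, ∀ α : Finset ℕ+, α.Nonempty →
    ∃ k ∈ A, (k : ℕ) = ∑ n ∈ α, (x n : ℕ)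

section Aux

variable {X : Type*} [TopologicalSpace X] {T : X → X} {x y : X}

/-- Pick `n ≥ 1` with `T^n x ∈ V` and `T^n y ∈ V`. -/
noncomputable def pickN (h : StronglyProximal T x y) (V : Set X) (hV : IsOpen V)
    (hy : y ∈ V) : ℕ+ :=
  (h (V ×ˢ V) (hV.prod hV) ⟨hy, hy⟩ 1).choose

lemma pickN_spec (h : StronglyProximal T x y) (V : Set X) (hV : IsOpen V) (hy : y ∈ V) :
    T^[(pickN h V hV hy : ℕ)] x ∈ V ∧ T^[(pickN h V hV hy : ℕ)] y ∈ V :=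
  (h (V ×ˢ V) (hV.prod hV) ⟨hy, hy⟩ 1).choose_spec.2

variable (hT : Continuous T) (h : StronglyProximal T x y)
  (U : Set X) (hU : IsOpen U) (hyU : y ∈ U)

/-- The decreasing chain of open neighborhoods of `y`. -/
noncomputable def chain : ℕ → {V : Set X // IsOpen V ∧ y ∈ V}
  | 0 => ⟨U, hU, hyU⟩
  | k + 1 =>
    let s := chain k
    let n := pickN h s.1 s.2.1 s.2.2
    ⟨s.1 ∩ T^[(n : ℕ)] ⁻¹' s.1,
      (s.2.1).inter ((s.2.1).preimage (hT.iterate _)),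
      ⟨s.2.2, (pickN_spec h s.1 s.2.1 s.2.2).2⟩⟩

/-- The IP-generating sequence. -/
noncomputable def nseq (k : ℕ) : ℕ+ :=
  pickN h (chain hT h U hU hyU k).1 (chain hT h U hU hyU k).2.1 (chain hT h U hU hyU k).2.2

lemma chain_succ (k : ℕ) :
    (chain hT h U hU hyU (k + 1)).1 =
      (chain hT h U hU hyU k).1 ∩
        T^[(nseq hT h U hU hyU k : ℕ)] ⁻¹' (chain hT h U hU hyU k).1 := rfl

lemma nseq_mem (k : ℕ) :
    T^[(nseq hT h U hU hyU k : ℕ)] x ∈ (chain hT h U hU hyU k).1 ∧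
      T^[(nseq hT h U hU hyU k : ℕ)] y ∈ (chain hT h U hU hyU k).1 :=
  pickN_spec h _ _ _

lemma chain_anti {i j : ℕ} (hij : i ≤ j) :
    (chain hT h U hU hyU j).1 ⊆ (chain hT h U hU hyU i).1 := by
  induction j with
  | zero => simp_all
  | succ k ih =>
    rcases Nat.lt_or_ge i (k + 1) with hlt | hge
    · exact (Set.inter_subset_left).trans (ih (Nat.lt_succ_iff.mp hlt))
    · have : i = k + 1 := le_antisymm hij hge
      subst this; exact subset_rfl

lemma chain_subset (k : ℕ) : (chain hT h U hU hyU k).1 ⊆ U :=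
  chain_anti hT h U hU hyU (Nat.zero_le k)

/-- Key combinatorial claim: if `z` lands in `chain (max β)` after `nseq (max β)` steps,
then the iterate by the full sum over `β` lands in `U`. -/
lemma claim_full : ∀ (c : ℕ) (β : Finset ℕ) (hne : β.Nonempty), β.card = c → ∀ z : X,
    T^[(nseq hT h U hU hyU (β.max' hne) : ℕ)] z ∈ (chain hT h U hU hyU (β.max' hne)).1 →
    T^[∑ i ∈ β, (nseq hT h U hU hyU i : ℕ)] z ∈ U := by
  intro c
  induction c using Nat.strong_induction_on with
  | _ c ih =>
    intro β hne hcard z hz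
    set m := β.max' hne with hm
    have hmβ : m ∈ β := β.max'_mem hne
    have hsum : ∑ i ∈ β.erase m, (nseq hT h U hU hyU i : ℕ) + (nseq hT h U hU hyU m : ℕ)
        = ∑ i ∈ β, (nseq hT h U hU hyU i : ℕ) := Finset.sum_erase_add β _ hmβ
    rcases Finset.eq_empty_or_nonempty (β.erase m) with hemp | hne'
    · have hβ : β = {m} := by
        rcases (Finset.erase_eq_empty_iff β m).mp hemp with h0 | h1
        · exact absurd h0 (Finset.nonempty_iff_ne_empty.mp hne)
        · exact h1
      rw [hβ, Finset.sum_singleton]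
      exact chain_subset hT h U hU hyU m hz
    · set m' := (β.erase m).max' hne' with hm'
      have hm'β : m' ∈ β.erase m := (β.erase m).max'_mem hne'
      have hm'lt : m' < m := by
        have h1 : m' ≤ m := β.le_max' m' (Finset.mem_of_mem_erase hm'β)
        have h2 : m' ≠ m := Finset.ne_of_mem_erase hm'β
        exact lt_of_le_of_ne h1 h2
      -- z' := T^[nseq m] z ∈ chain m ⊆ chain (m'+1) ⊆ preimage of chain m'
      have hz' : T^[(nseq hT h U hU hyU m' : ℕ)] (T^[(nseq hT h U hU hyU m : ℕ)] z)
          ∈ (chain hT h U hU hyU m').1 := by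
        have h1 : T^[(nseq hT h U hU hyU m : ℕ)] z ∈ (chain hT h U hU hyU (m' + 1)).1 :=
          chain_anti hT h U hU hyU hm'lt hz
        rw [chain_succ] at h1
        exact h1.2
      have hcard' : (β.erase m).card < c := by
        rw [← hcard]
        exact Finset.card_erase_lt_of_mem hmβ
      have := ih _ hcard' (β.erase m) hne' rfl (T^[(nseq hT h U hU hyU m : ℕ)] z) hz'
      rw [← hsum, Function.iterate_add_apply]
      exact this

lemma sums_mem (β : Finset ℕ) (hne : β.Nonempty) :
    T^[∑ i ∈ β, (nseq hT h U hU hyU i : ℕ)] x ∈ U ∧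
      T^[∑ i ∈ β, (nseq hT h U hU hyU i : ℕ)] y ∈ U :=
  ⟨claim_full hT h U hU hyU β.card β hne rfl x (nseq_mem hT h U hU hyU _).1,
   claim_full hT h U hU hyU β.card β hne rfl y (nseq_mem hT h U hU hyU _).2⟩

include hT h hU hyU in
/-- (1) ⇒ (2). -/
lemma sp_to_ip : IsIPSet {n : ℕ+ | T^[(n : ℕ)] x ∈ U ∧ T^[(n : ℕ)] y ∈ U} := by
  refine ⟨fun n => nseq hT h U hU hyU n.natPred, fun α hα => ?_⟩
  have hβne : (α.image PNat.natPred).Nonempty := hα.image _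
  have hsum : ∑ i ∈ α.image PNat.natPred, (nseq hT h U hU hyU i : ℕ)
      = ∑ n ∈ α, (nseq hT h U hU hyU n.natPred : ℕ) :=
    Finset.sum_image (fun a _ b _ hab => PNat.natPred_injective hab)
  have hpos : 0 < ∑ i ∈ α.image PNat.natPred, (nseq hT h U hU hyU i : ℕ) :=
    Finset.sum_pos (fun i _ => (nseq hT h U hU hyU i).pos) hβne
  refine ⟨⟨∑ i ∈ α.image PNat.natPred, (nseq hT h U hU hyU i : ℕ), hpos⟩,
    sums_mem hT h U hU hyU _ hβne, ?_⟩
  show ∑ i ∈ α.image PNat.natPred, (nseq hT h U hU hyU i : ℕ) = _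
  exact hsum

end Aux

section Aux2

variable {X : Type*} [TopologicalSpace X] {T : X → X} {x y : X}

lemma pnat_card_Iic (m : ℕ+) : (Finset.Iic m).card = (m : ℕ) := by
  rw [Finset.Iic_eq_Icc]
  show (Finset.Icc 1 m).card = (m : ℕ)
  rw [PNat.card_Icc]
  simp

/-- (2) ⇒ (1). -/
lemma ip_to_sp
    (hIP : ∀ U : Set X, IsOpen U → y ∈ U →
      IsIPSet {n : ℕ+ | T^[(n : ℕ)] x ∈ U ∧ T^[(n : ℕ)] y ∈ U}) :
    StronglyProximal T x y := by
  intro W hW hyW m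
  obtain ⟨u, v, hu, hv, hyu, hyv, huv⟩ := isOpen_prod_iff.mp hW y y hyW
  obtain ⟨s, hs⟩ := hIP (u ∩ v) (hu.inter hv) ⟨hyu, hyv⟩
  obtain ⟨k, hk, hkeq⟩ := hs (Finset.Iic m) ⟨m, Finset.mem_Iic.mpr le_rfl⟩
  refine ⟨k, ?_, huv ⟨hk.1.1, hk.2.2⟩⟩
  have h1 : (Finset.Iic m).card • 1 ≤ ∑ n ∈ Finset.Iic m, (s n : ℕ) :=
    Finset.card_nsmul_le_sum _ _ 1 (fun n _ => (s n).one_le)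
  have h2 : (m : ℕ) ≤ (k : ℕ) := by
    rw [hkeq]
    simpa [pnat_card_Iic] using h1
  exact h2

/-- (2) ⇒ (3). -/
lemma ip_to_pow
    (hIP : ∀ U : Set X, IsOpen U → y ∈ U →
      IsIPSet {n : ℕ+ | T^[(n : ℕ)] x ∈ U ∧ T^[(n : ℕ)] y ∈ U})
    (k : ℕ+) : StronglyProximal (T^[(k : ℕ)]) x y := by
  intro W hW hyW m
  obtain ⟨u, v, hu, hv, hyu, hyv, huv⟩ := isOpen_prod_iff.mp hW y y hyW
  obtain ⟨s, hs⟩ := hIP (u ∩ v) (hu.inter hv) ⟨hyu, hyv⟩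
  set M : ℕ+ := k * m with hM
  set t : ℕ → ℕ := fun j => ∑ n ∈ Finset.Iic (M * j.succPNat), (s n : ℕ) with ht
  -- pigeonhole on residues mod k
  obtain ⟨i, hi, j, hj, hij, heq⟩ :
      ∃ i ∈ Finset.range ((k : ℕ) + 1), ∃ j ∈ Finset.range ((k : ℕ) + 1),
        i ≠ j ∧ t i % (k : ℕ) = t j % (k : ℕ) := by
    apply Finset.exists_ne_map_eq_of_card_lt_of_maps_to (t := Finset.range (k : ℕ))
    · simp
    · intro a _
      exact Finset.mem_range.mpr (Nat.mod_lt _ k.pos)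
  -- wlog i < j
  wlog hlt : i < j generalizing i j
  · exact this j hj i hi hij.symm heq.symm ((hij.lt_or_gt).resolve_left hlt)
  set a : ℕ+ := M * i.succPNat with ha
  set b : ℕ+ := M * j.succPNat with hb
  have hab : a < b := by
    exact mul_lt_mul_right (Nat.succPNat_lt_succPNat.mpr hlt) M
  -- split the sum
  have hsplit : t j = t i + ∑ n ∈ Finset.Ioc a b, (s n : ℕ) := by
    have hun : Finset.Iic a ∪ Finset.Ioc a b = Finset.Iic b := by
      ext n
      simp only [Finset.mem_union, Finset.mem_Iic, Finset.mem_Ioc]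
      constructor
      · rintro (h1 | ⟨_, h2⟩)
        · exact h1.trans hab.le
        · exact h2
      · intro h1
        rcases le_or_gt n a with h2 | h2
        · exact Or.inl h2
        · exact Or.inr ⟨h2, h1⟩
    have hdis : Disjoint (Finset.Iic a) (Finset.Ioc a b) := by
      rw [Finset.disjoint_left]
      intro n h1 h2
      exact absurd (Finset.mem_Iic.mp h1) (not_le.mpr (Finset.mem_Ioc.mp h2).1)
    calc t j = ∑ n ∈ Finset.Iic a ∪ Finset.Ioc a b, (s n : ℕ) := by rw [hun]
      _ = t i + ∑ n ∈ Finset.Ioc a b, (s n : ℕ) := Finset.sum_union hdis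
  set D : ℕ := ∑ n ∈ Finset.Ioc a b, (s n : ℕ) with hD
  have hdvd : (k : ℕ) ∣ D := by
    have h1 : t i ≤ t j := by omega
    have h2 : (k : ℕ) ∣ t j - t i := (Nat.modEq_iff_dvd' h1).mp heq
    have h3 : t j - t i = D := by omega
    rwa [h3] at h2
  have hcard : (Finset.Ioc a b).card = (b : ℕ) - (a : ℕ) := PNat.card_Ioc a b
  have hDM : (M : ℕ) ≤ D := by
    have h1 : (Finset.Ioc a b).card • 1 ≤ D :=
      Finset.card_nsmul_le_sum _ _ 1 (fun n _ => (s n).one_le)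
    rw [smul_eq_mul, mul_one, hcard] at h1
    have h2 : (a : ℕ) + M ≤ (b : ℕ) := by
      have : (M : ℕ) * (i + 1) + (M : ℕ) * 1 ≤ (M : ℕ) * (j + 1) := by
        rw [← Nat.mul_add]
        exact Nat.mul_le_mul_left _ (by omega)
      rw [ha, hb, PNat.mul_coe (n := Nat.succPNat i), PNat.mul_coe (n := Nat.succPNat j), Nat.succPNat_coe,
        Nat.succPNat_coe]
      simpa using this
    omega
  obtain ⟨c, hc⟩ := hdvd
  have hMkm : (M : ℕ) = (k : ℕ) * (m : ℕ) := rfl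
  have hcm : (m : ℕ) ≤ c := by
    have := hDM
    rw [hc, hMkm] at this
    exact Nat.le_of_mul_le_mul_left this k.pos
  have hcpos : 0 < c := lt_of_lt_of_le m.pos hcm
  obtain ⟨p, hpA, hpeq⟩ := hs (Finset.Ioc a b) (Finset.nonempty_Ioc.mpr hab)
  have hpD : (p : ℕ) = (k : ℕ) * c := by rw [hpeq, ← hD, hc]
  refine ⟨⟨c, hcpos⟩, hcm, huv ?_⟩
  have hx : (T^[(k : ℕ)])^[c] x = T^[(p : ℕ)] x := by
    rw [hpD, ← Function.iterate_mul]
  have hy' : (T^[(k : ℕ)])^[c] y = T^[(p : ℕ)] y := by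
    rw [hpD, ← Function.iterate_mul]
  constructor
  · show (T^[(k : ℕ)])^[c] x ∈ u
    rw [hx]; exact hpA.1.1
  · show (T^[(k : ℕ)])^[c] y ∈ v
    rw [hy']; exact hpA.2.2

end Aux2

/-- For a dynamical system `(X, T)` and `x, y ∈ X`, the following are equivalent:
(1) `x` is strongly proximal to `y`; (2) `{n | T^n x ∈ U ∧ T^n y ∈ U}` is an IP set
for every open neighborhood `U` of `y`; (3) for every `k ∈ ℕ₊`, `x` is strongly
proximal to `y` in `(X, T^k)`. -/
theorem strongly_proximal_iff_ip
    {X : Type*} [TopologicalSpace X] [CompactSpace X] [T2Space X] [Nonempty X]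
    (T : X → X) (hT : Continuous T) (x y : X) :
    (StronglyProximal T x y ↔
      ∀ U : Set X, IsOpen U → y ∈ U →
        IsIPSet {n : ℕ+ | T^[(n : ℕ)] x ∈ U ∧ T^[(n : ℕ)] y ∈ U}) ∧
    (StronglyProximal T x y ↔
      ∀ k : ℕ+, StronglyProximal (T^[(k : ℕ)]) x y) := by
  constructor
  · exact ⟨fun h U hU hyU => sp_to_ip hT h U hU hyU, fun h => ip_to_sp h⟩
  · constructor
    · intro h k
      exact ip_to_pow (fun U hU hyU => sp_to_ip hT h U hU hyU) k
    · intro h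
      have h1 := h 1
      simpa only [PNat.one_coe, Function.iterate_one] using h1
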